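/- arXiv:1905.06023 — 2 statements merged into one kernel-verified Lean document; each statement's English description precedes it below -/
import Mathlib

section
/- The Beta calibration map c_β(q) = Φ(a·ln(q) − b·ln(1−q) + c), where Φ(z) = 1/(1+e^{−z}), is monotonically nondecreasing on (0,1) if and only if a ≥ 0 and b ≥ 0. -/
open Set

noncomputable def betaCal (a b c : ℝ) (q : ℝ) : ℝ :=
  1 / (1 + Real.exp (-(a * Real.log q - b * Real.log (1 - q) + c)))

private noncomputable def gAux (a b c : ℝ) (q : ℝ) : ℝ :=
  a * Real.log q - b * Real.log (1 - q) + c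

private lemma betaCal_le_iff (a b c x y : ℝ) :
    betaCal a b c x ≤ betaCal a b c y ↔ gAux a b c x ≤ gAux a b c y := by
  unfold betaCal gAux
  have hx : (0:ℝ) < 1 + Real.exp (-(a * Real.log x - b * Real.log (1 - x) + c)) := by positivity
  have hy : (0:ℝ) < 1 + Real.exp (-(a * Real.log y - b * Real.log (1 - y) + c)) := by positivity
  rw [div_le_div_iff₀ hx hy]
  constructor
  · intro h
    have h2 : Real.exp (-(a * Real.log y - b * Real.log (1 - y) + c)) ≤
        Real.exp (-(a * Real.log x - b * Real.log (1 - x) + c)) := by linarith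
    have := Real.exp_le_exp.mp h2
    linarith
  · intro h
    have h2 : Real.exp (-(a * Real.log y - b * Real.log (1 - y) + c)) ≤
        Real.exp (-(a * Real.log x - b * Real.log (1 - x) + c)) :=
      Real.exp_le_exp.mpr (by linarith)
    linarith

/-- The Beta calibration map is nondecreasing on (0,1) iff a ≥ 0 and b ≥ 0. -/
theorem betaCal_monotoneOn_iff (a b c : ℝ) :
    MonotoneOn (betaCal a b c) (Ioo (0:ℝ) 1) ↔ 0 ≤ a ∧ 0 ≤ b := by
  have hiff : MonotoneOn (betaCal a b c) (Ioo (0:ℝ) 1) ↔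
      MonotoneOn (gAux a b c) (Ioo (0:ℝ) 1) := by
    constructor
    · intro h x hx y hy hxy
      exact (betaCal_le_iff a b c x y).mp (h hx hy hxy)
    · intro h x hx y hy hxy
      exact (betaCal_le_iff a b c x y).mpr (h hx hy hxy)
  rw [hiff]
  have hlog2 : (0:ℝ) < Real.log 2 := Real.log_pos (by norm_num)
  constructor
  · intro h
    constructor
    · -- 0 ≤ a
      by_contra ha
      push_neg at ha
      set t : ℝ := (|b| * Real.log 2 + 1) / (-a) with ht
      have htpos : 0 < t := by
        apply div_pos
        · nlinarith [abs_nonneg b]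
        · linarith
      set x : ℝ := Real.exp (-t) / 2 with hxdef
      have hx1 : 0 < x := by positivity
      have hexlt : Real.exp (-t) < 1 := Real.exp_lt_one_iff.mpr (by linarith)
      have hx2 : x < 1/2 := by
        rw [hxdef]; linarith
      have hmem : x ∈ Ioo (0:ℝ) 1 := ⟨hx1, by linarith⟩
      have hmem2 : (1/2 : ℝ) ∈ Ioo (0:ℝ) 1 := by norm_num
      have hle := h hmem hmem2 (le_of_lt hx2)
      unfold gAux at hle
      have hlogx : Real.log x = -t - Real.log 2 := by
        rw [hxdef, Real.log_div (by positivity) (by norm_num), Real.log_exp]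
      have hlogh : Real.log (1/2 : ℝ) = -Real.log 2 := by
        rw [one_div, Real.log_inv]
      have h1x : (1/2:ℝ) < 1 - x := by linarith
      have h1x1 : 1 - x < 1 := by linarith
      have hL1 : Real.log (1 - x) ≤ 0 := Real.log_nonpos (by linarith) (by linarith)
      have hL2 : -Real.log 2 ≤ Real.log (1 - x) := by
        have := Real.log_le_log (by norm_num : (0:ℝ) < 1/2) (le_of_lt h1x)
        rw [hlogh] at this; linarith
      rw [hlogx] at hle
      norm_num [hlogh] at hle
      -- hle : a * (-t - log 2) - b * log(1-x) + c ≤ -a*log2 + b*log2 + c (roughly)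
      have key : -a * t ≤ b * (Real.log 2 + Real.log (1 - x)) := by nlinarith
      have hb1 : b * (Real.log 2 + Real.log (1 - x)) ≤ |b| * Real.log 2 := by
        calc b * (Real.log 2 + Real.log (1 - x)) ≤ |b * (Real.log 2 + Real.log (1 - x))| :=
              le_abs_self _
          _ = |b| * |Real.log 2 + Real.log (1 - x)| := abs_mul _ _
          _ ≤ |b| * Real.log 2 := by
              apply mul_le_mul_of_nonneg_left _ (abs_nonneg b)
              rw [abs_le]; constructor <;> linarith
      have hat : -a * t = |b| * Real.log 2 + 1 := by
        rw [ht]; field_simp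
        exact div_self (ne_of_lt ha)
      linarith
    · -- 0 ≤ b
      by_contra hb
      push_neg at hb
      set t : ℝ := (|a| * Real.log 2 + 1) / (-b) with ht
      have htpos : 0 < t := by
        apply div_pos
        · nlinarith [abs_nonneg a]
        · linarith
      set y : ℝ := 1 - Real.exp (-t) / 2 with hydef
      have hexpos : 0 < Real.exp (-t) := Real.exp_pos _
      have hexlt : Real.exp (-t) < 1 := Real.exp_lt_one_iff.mpr (by linarith)
      have hy1 : 1/2 < y := by rw [hydef]; linarith
      have hy2 : y < 1 := by rw [hydef]; linarith
      have hy0 : 0 < y := by rw [hydef]; linarith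
      have hmem : y ∈ Ioo (0:ℝ) 1 := ⟨hy0, hy2⟩
      have hmem2 : (1/2 : ℝ) ∈ Ioo (0:ℝ) 1 := by norm_num
      have hle := h hmem2 hmem (le_of_lt hy1)
      unfold gAux at hle
      have hlogh : Real.log (1/2 : ℝ) = -Real.log 2 := by
        rw [one_div, Real.log_inv]
      have hlog1y : Real.log (1 - y) = -t - Real.log 2 := by
        have : 1 - y = Real.exp (-t) / 2 := by rw [hydef]; ring
        rw [this, Real.log_div (by positivity) (by norm_num), Real.log_exp]
      have hLy1 : Real.log y ≤ 0 := Real.log_nonpos hy0.le (le_of_lt hy2)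
      have hLy2 : -Real.log 2 ≤ Real.log y := by
        have := Real.log_le_log (by norm_num : (0:ℝ) < 1/2) (le_of_lt hy1)
        rw [hlogh] at this; linarith
      rw [hlog1y] at hle
      norm_num [hlogh] at hle
      have key : -b * t ≤ a * (Real.log 2 + Real.log y) := by nlinarith
      have ha1 : a * (Real.log 2 + Real.log y) ≤ |a| * Real.log 2 := by
        calc a * (Real.log 2 + Real.log y) ≤ |a * (Real.log 2 + Real.log y)| := le_abs_self _
          _ = |a| * |Real.log 2 + Real.log y| := abs_mul _ _
          _ ≤ |a| * Real.log 2 := by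
              apply mul_le_mul_of_nonneg_left _ (abs_nonneg a)
              rw [abs_le]; constructor <;> linarith
      have hbt : -b * t = |a| * Real.log 2 + 1 := by
        rw [ht]; field_simp
        exact div_self (ne_of_lt hb)
      linarith
  · rintro ⟨ha, hb⟩ x hx y hy hxy
    unfold gAux
    have h1 : a * Real.log x ≤ a * Real.log y :=
      mul_le_mul_of_nonneg_left (Real.log_le_log hx.1 hxy) ha
    have h2 : b * Real.log (1 - y) ≤ b * Real.log (1 - x) :=
      mul_le_mul_of_nonneg_left (Real.log_le_log (by linarith [hy.2]) (by linarith)) hb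
    linarith
end

section
/- The Beta link ratio r_β(q) = [q^a (1−q)^b e^{−c} (a − (a−b)q)] / [q(1−q)(q^a + (1−q)^b e^{−c})^2] is nonnegative for all q ∈ (0,1) if and only if a ≥ 0 and b ≥ 0. -/
open Set

noncomputable def betaLink (a b c : ℝ) (q : ℝ) : ℝ :=
  (q ^ a * (1 - q) ^ b * Real.exp (-c) * (a - (a - b) * q)) /
    (q * (1 - q) * (q ^ a + (1 - q) ^ b * Real.exp (-c)) ^ 2)

/-- The Beta link ratio is nonnegative on (0,1) iff a ≥ 0 and b ≥ 0. -/
theorem betaLink_nonneg_iff (a b c : ℝ) :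
    (∀ q ∈ Ioo (0:ℝ) 1, 0 ≤ betaLink a b c q) ↔ 0 ≤ a ∧ 0 ≤ b := by
  have key : ∀ q ∈ Ioo (0:ℝ) 1, (0 ≤ betaLink a b c q ↔ 0 ≤ a - (a - b) * q) := by
    intro q hq
    obtain ⟨hq0, hq1⟩ := hq
    have h1 : (0:ℝ) < 1 - q := by linarith
    have hqa : 0 < q ^ a := Real.rpow_pos_of_pos hq0 a
    have hqb : 0 < (1-q) ^ b := Real.rpow_pos_of_pos h1 b
    have he : 0 < Real.exp (-c) := Real.exp_pos _
    have hP : 0 < q ^ a * (1 - q) ^ b * Real.exp (-c) := by positivity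
    have hD : 0 < q * (1 - q) * (q ^ a + (1 - q) ^ b * Real.exp (-c)) ^ 2 := by positivity
    unfold betaLink
    rw [div_nonneg_iff]
    constructor
    · rintro (⟨h, _⟩ | ⟨_, h⟩)
      · exact nonneg_of_mul_nonneg_right h hP
      · linarith
    · intro h
      exact Or.inl ⟨mul_nonneg hP.le h, hD.le⟩
  constructor
  · intro h
    have hlin : ∀ q ∈ Ioo (0:ℝ) 1, 0 ≤ a - (a - b) * q :=
      fun q hq => (key q hq).mp (h q hq)
    have hcl : closure (Ioo (0:ℝ) 1) ⊆ {q : ℝ | 0 ≤ a - (a - b) * q} :=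
      closure_minimal hlin (isClosed_le continuous_const (by continuity))
    rw [closure_Ioo (by norm_num : (0:ℝ) ≠ 1)] at hcl
    have ha := hcl (by constructor <;> norm_num : (0:ℝ) ∈ Icc (0:ℝ) 1)
    have hb := hcl (by constructor <;> norm_num : (1:ℝ) ∈ Icc (0:ℝ) 1)
    simp only [mem_setOf_eq] at ha hb
    constructor <;> linarith
  · rintro ⟨ha, hb⟩ q hq
    refine (key q hq).mpr ?_
    obtain ⟨hq0, hq1⟩ := hq
    nlinarith
end
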